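/- Let m ≥ n ≥ 1 be integers. For A ∈ Matrix (Fin m) (Fin n) ℂ let S(A) = {(X,Y) ∈ 𝔲(m) × 𝔲(n) : X·A = A·Y} and T(A) = {X·A − A·Y : X ∈ 𝔲(m), Y ∈ 𝔲(n)}, regarded as real vector spaces. Then the minimum over all A of dim_ℝ S(A) equals (m−n)² + n, and the maximum over all A of dim_ℝ T(A) equals 2mn − n. Equivalently, the action of U(m)×U(n) on m×n complex matrices by (g,h)·A = g A h* has principal isotropy groups of dimension dim(U(m−n)×U(1)ⁿ) and cohomogeneity n. -/

import Mathlib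

open Matrix

/-- `S(A) = {(X,Y) ∈ 𝔲(m) × 𝔲(n) : X·A = A·Y}` (skew-Hermitian matrices). -/
def stabSet1 {m n : ℕ} (A : Matrix (Fin m) (Fin n) ℂ) :
    Set (Matrix (Fin m) (Fin m) ℂ × Matrix (Fin n) (Fin n) ℂ) :=
  {p | p.1ᴴ = -p.1 ∧ p.2ᴴ = -p.2 ∧ p.1 * A = A * p.2}

/-- `T(A) = {X·A − A·Y : X ∈ 𝔲(m), Y ∈ 𝔲(n)}`. -/
def tangSet1 {m n : ℕ} (A : Matrix (Fin m) (Fin n) ℂ) :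
    Set (Matrix (Fin m) (Fin n) ℂ) :=
  {B | ∃ X : Matrix (Fin m) (Fin m) ℂ, ∃ Y : Matrix (Fin n) (Fin n) ℂ,
    Xᴴ = -X ∧ Yᴴ = -Y ∧ B = X * A - A * Y}

open Module

set_option synthInstance.maxHeartbeats 1000000
set_option maxHeartbeats 1000000

/-! ### skew-Hermitian matrices as a real submodule, and its dimension -/

noncomputable def mySkew (k : ℕ) : Submodule ℝ (Matrix (Fin k) (Fin k) ℂ) where
  carrier := {X | Xᴴ = -X}
  add_mem' := by intro a b ha hb; simp_all [conjTranspose_add]; abel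
  zero_mem' := by simp
  smul_mem' := by
    intro c X hX
    simp only [Set.mem_setOf_eq] at *
    rw [conjTranspose_smul, hX, star_trivial, smul_neg]

noncomputable def mySelf (k : ℕ) : Submodule ℝ (Matrix (Fin k) (Fin k) ℂ) where
  carrier := {X | Xᴴ = X}
  add_mem' := by intro a b ha hb; simp_all [conjTranspose_add]
  zero_mem' := by simp
  smul_mem' := by
    intro c X hX
    simp only [Set.mem_setOf_eq] at *
    rw [conjTranspose_smul, hX]; norm_num

lemma mem_mySkew {k : ℕ} {X : Matrix (Fin k) (Fin k) ℂ} : X ∈ mySkew k ↔ Xᴴ = -X := Iff.rfl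
lemma mem_mySelf {k : ℕ} {X : Matrix (Fin k) (Fin k) ℂ} : X ∈ mySelf k ↔ Xᴴ = X := Iff.rfl

noncomputable def selfEquivSkew (k : ℕ) : mySelf k ≃ₗ[ℝ] mySkew k where
  toFun := fun X => ⟨Complex.I • X.1, by
    have hX := X.2
    rw [mem_mySkew, conjTranspose_smul, show X.1ᴴ = X.1 from hX]
    simp [Complex.star_def, Complex.conj_I]⟩
  map_add' := by intro a b; ext1; simp
  map_smul' := by
    intro c a; ext1
    show Complex.I • (c • a.1) = c • (Complex.I • a.1)
    rw [smul_comm]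
  invFun := fun X => ⟨(-Complex.I) • X.1, by
    have hX := X.2
    rw [mem_mySelf, conjTranspose_smul, show X.1ᴴ = -X.1 from hX]
    simp [Complex.conj_I]⟩
  left_inv := by intro a; ext1; simp [smul_smul]
  right_inv := by intro a; ext1; simp [smul_smul]

lemma mySelf_sup_mySkew (k : ℕ) : mySelf k ⊔ mySkew k = ⊤ := by
  rw [eq_top_iff]
  intro X _
  rw [Submodule.mem_sup]
  refine ⟨(1/2 : ℝ) • (X + Xᴴ), Submodule.smul_mem _ _ ?_, (1/2 : ℝ) • (X - Xᴴ),
    Submodule.smul_mem _ _ ?_, ?_⟩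
  · rw [mem_mySelf, conjTranspose_add, conjTranspose_conjTranspose]; abel
  · rw [mem_mySkew, conjTranspose_sub, conjTranspose_conjTranspose]; abel
  · rw [← smul_add]; rw [show X + Xᴴ + (X - Xᴴ) = (2:ℝ) • X by module]
    rw [smul_smul]; norm_num

lemma mySelf_inf_mySkew (k : ℕ) : mySelf k ⊓ mySkew k = ⊥ := by
  rw [eq_bot_iff]
  rintro X ⟨h1, h2⟩
  have h1 : Xᴴ = X := h1
  have h2 : Xᴴ = -X := h2
  have h3 : X = -X := h1.symm.trans h2
  have h4 : (2 : ℝ) • X = 0 := by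
    rw [two_smul]; nth_rewrite 2 [h3]; simp
  simpa using smul_eq_zero.mp h4 |>.resolve_left (by norm_num)

lemma finrank_mySkew (k : ℕ) : finrank ℝ (mySkew k) = k ^ 2 := by
  have h1 := Submodule.finrank_sup_add_finrank_inf_eq (mySelf k) (mySkew k)
  rw [mySelf_sup_mySkew, mySelf_inf_mySkew, finrank_top, finrank_bot] at h1
  have h2 : finrank ℝ (mySelf k) = finrank ℝ (mySkew k) :=
    (selfEquivSkew k).finrank_eq
  have h3 : finrank ℝ (Matrix (Fin k) (Fin k) ℂ) = 2 * k ^ 2 := by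
    rw [Module.finrank_matrix]
    simp [Complex.finrank_real_complex]; ring
  omega

/-! ### the stabilizer submodule, tangent map, rank-nullity -/

variable {m n : ℕ}

noncomputable def stabMod (A : Matrix (Fin m) (Fin n) ℂ) :
    Submodule ℝ (Matrix (Fin m) (Fin m) ℂ × Matrix (Fin n) (Fin n) ℂ) where
  carrier := stabSet1 A
  add_mem' := by
    rintro ⟨a1, a2⟩ ⟨b1, b2⟩ ⟨ha1, ha2, ha3⟩ ⟨hb1, hb2, hb3⟩
    refine ⟨?_, ?_, ?_⟩
    · show (a1 + b1)ᴴ = -(a1 + b1); rw [conjTranspose_add, ha1, hb1]; abel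
    · show (a2 + b2)ᴴ = -(a2 + b2); rw [conjTranspose_add, ha2, hb2]; abel
    · show (a1 + b1) * A = A * (a2 + b2); rw [Matrix.add_mul, Matrix.mul_add, ha3, hb3]
  zero_mem' := by refine ⟨by simp, by simp, by simp⟩
  smul_mem' := by
    rintro c ⟨a1, a2⟩ ⟨h1, h2, h3⟩
    refine ⟨?_, ?_, ?_⟩
    · show (c • a1)ᴴ = -(c • a1); rw [conjTranspose_smul, h1, star_trivial, smul_neg]
    · show (c • a2)ᴴ = -(c • a2); rw [conjTranspose_smul, h2, star_trivial, smul_neg]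
    · show (c • a1) * A = A * (c • a2); rw [Matrix.smul_mul, Matrix.mul_smul, h3]

lemma span_stabSet1 (A : Matrix (Fin m) (Fin n) ℂ) :
    Submodule.span ℝ (stabSet1 A) = stabMod A := by
  have : stabSet1 A = (stabMod A : Set _) := rfl
  rw [this, Submodule.span_eq]

noncomputable def tangMap (A : Matrix (Fin m) (Fin n) ℂ) :
    (mySkew m × mySkew n) →ₗ[ℝ] Matrix (Fin m) (Fin n) ℂ where
  toFun p := p.1.1 * A - A * p.2.1
  map_add' := by
    rintro ⟨a1, a2⟩ ⟨b1, b2⟩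
    show (a1.1 + b1.1) * A - A * (a2.1 + b2.1) = _
    rw [Matrix.add_mul, Matrix.mul_add]; abel
  map_smul' := by
    rintro c ⟨a1, a2⟩
    show (c • a1.1) * A - A * (c • a2.1) = c • (a1.1 * A - A * a2.1)
    rw [Matrix.smul_mul, Matrix.mul_smul, smul_sub]

lemma range_tangMap (A : Matrix (Fin m) (Fin n) ℂ) :
    Submodule.span ℝ (tangSet1 A) = LinearMap.range (tangMap A) := by
  have : tangSet1 A = (LinearMap.range (tangMap A) : Set _) := by
    ext B
    constructor
    · rintro ⟨X, Y, hX, hY, rfl⟩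
      exact ⟨(⟨X, hX⟩, ⟨Y, hY⟩), rfl⟩
    · rintro ⟨⟨X, Y⟩, rfl⟩
      exact ⟨X.1, Y.1, X.2, Y.2, rfl⟩
  rw [this, Submodule.span_eq]

noncomputable def kerEquivStab (A : Matrix (Fin m) (Fin n) ℂ) :
    LinearMap.ker (tangMap A) ≃ₗ[ℝ] stabMod A where
  toFun p := ⟨(p.1.1.1, p.1.2.1), p.1.1.2, p.1.2.2,
    sub_eq_zero.mp (LinearMap.mem_ker.mp p.2)⟩
  map_add' := by rintro ⟨⟨a1, a2⟩, ha⟩ ⟨⟨b1, b2⟩, hb⟩; rfl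
  map_smul' := by rintro c ⟨⟨a1, a2⟩, ha⟩; rfl
  invFun p := ⟨(⟨p.1.1, p.2.1⟩, ⟨p.1.2, p.2.2.1⟩),
    LinearMap.mem_ker.mpr (sub_eq_zero.mpr p.2.2.2)⟩
  left_inv := by rintro ⟨⟨a1, a2⟩, ha⟩; rfl
  right_inv := by rintro ⟨⟨a1, a2⟩, h1, h2, h3⟩; rfl

lemma stab_add_tang (A : Matrix (Fin m) (Fin n) ℂ) :
    finrank ℝ (Submodule.span ℝ (stabSet1 A)) +
    finrank ℝ (Submodule.span ℝ (tangSet1 A)) = m ^ 2 + n ^ 2 := by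
  rw [span_stabSet1, range_tangMap]
  have h1 : finrank ℝ (LinearMap.ker (tangMap A)) = finrank ℝ (stabMod A) :=
    (kerEquivStab A).finrank_eq
  have h2 := LinearMap.finrank_range_add_finrank_ker (tangMap A)
  have h3 : finrank ℝ (mySkew m × mySkew n) = m ^ 2 + n ^ 2 := by
    rw [finrank_prod, finrank_mySkew, finrank_mySkew]
  omega

/-! ### isometry lemma -/

lemma exists_isometry (B : Matrix (Fin m) (Fin n) ℂ) (hmn : n ≤ m) :
    ∃ U : Matrix (Fin m) (Fin (m - n)) ℂ, Uᴴ * U = 1 ∧ Uᴴ * B = 0 := by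
  classical
  set e := WithLp.linearEquiv 2 ℂ (Fin m → ℂ) with he
  set Kc : Submodule ℂ (EuclideanSpace ℂ (Fin m)) :=
    (LinearMap.range B.mulVecLin).comap e.toLinearMap with hKc
  have hKfin : finrank ℂ Kc ≤ n := by
    have h1 : finrank ℂ Kc = finrank ℂ (LinearMap.range B.mulVecLin) := by
      rw [hKc, Submodule.comap_equiv_eq_map_symm]
      exact LinearEquiv.finrank_map_eq e.symm _
    rw [h1]
    calc finrank ℂ (LinearMap.range B.mulVecLin) ≤ finrank ℂ (Fin n → ℂ) :=
          LinearMap.finrank_range_le _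
      _ = n := by simp
  have horth : m - n ≤ finrank ℂ ↥Kcᗮ := by
    have := Submodule.finrank_add_finrank_orthogonal Kc
    have hm : finrank ℂ (EuclideanSpace ℂ (Fin m)) = m := by simp
    omega
  set ob := stdOrthonormalBasis ℂ ↥Kcᗮ with hob
  set u : Fin (m - n) → EuclideanSpace ℂ (Fin m) :=
    fun i => (ob (Fin.castLE horth i) : ↥Kcᗮ) with hu
  have huo : ∀ i j, (inner ℂ (u i) (u j) : ℂ) = if i = j then (1 : ℂ) else 0 := by
    intro i j
    have hon := ob.orthonormal
    rw [orthonormal_iff_ite] at hon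
    have h := hon (Fin.castLE horth i) (Fin.castLE horth j)
    rw [Submodule.coe_inner] at h
    rw [hu]
    simp only at h ⊢
    rw [h]
    congr 1
    simp [Fin.castLE, Fin.ext_iff]
  have humem : ∀ i, u i ∈ Kcᗮ := fun i => (ob (Fin.castLE horth i)).2
  refine ⟨Matrix.of (fun r i => u i r), ?_, ?_⟩
  · ext i j
    have h := huo i j
    rw [PiLp.inner_apply] at h
    simp only [RCLike.inner_apply'] at h
    simp only [Matrix.mul_apply, conjTranspose_apply, Matrix.of_apply, Complex.star_def]
    rw [h]
    simp [Matrix.one_apply]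
  · ext i j
    have hcol : (e.symm (fun r => B r j) : EuclideanSpace ℂ (Fin m)) ∈ Kc := by
      rw [hKc, Submodule.mem_comap]
      refine ⟨Pi.single j 1, ?_⟩
      simp only [mulVecLin_apply]
      rw [Matrix.mulVec_single]
      ext r
      simp [e]
    have h0 : (inner ℂ (u i) ((e.symm (fun r => B r j) : EuclideanSpace ℂ (Fin m))) : ℂ) = 0 := by
      rw [inner_eq_zero_symm]
      exact (Submodule.mem_orthogonal Kc (u i)).mp (humem i) _ hcol
    rw [PiLp.inner_apply] at h0
    simp only [RCLike.inner_apply'] at h0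
    simp only [Matrix.mul_apply, conjTranspose_apply, Matrix.of_apply, Complex.star_def, Matrix.zero_apply]
    have : ∀ r, ((e.symm (fun r => B r j) : EuclideanSpace ℂ (Fin m))) r = B r j := fun r => rfl
    simp only [this] at h0
    exact h0

/-! ### the lower-bound construction -/

/-- column norm-squares -/
noncomputable def dvec (B : Matrix (Fin m) (Fin n) ℂ) : Fin n → ℝ :=
  fun j => ∑ r, Complex.normSq (B r j)

lemma dvec_nonneg (B : Matrix (Fin m) (Fin n) ℂ) (j : Fin n) : 0 ≤ dvec B j :=
  Finset.sum_nonneg fun r _ => Complex.normSq_nonneg _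

lemma dvec_eq_zero {B : Matrix (Fin m) (Fin n) ℂ} {j : Fin n} (h : dvec B j = 0) :
    ∀ r, B r j = 0 := by
  intro r
  have := (Finset.sum_eq_zero_iff_of_nonneg
    (fun r _ => Complex.normSq_nonneg (B r j))).mp h r (Finset.mem_univ r)
  exact Complex.normSq_eq_zero.mp this

lemma mulconj_diag (B : Matrix (Fin m) (Fin n) ℂ) (j : Fin n) :
    (Bᴴ * B) j j = ((dvec B j : ℝ) : ℂ) := by
  simp only [Matrix.mul_apply, conjTranspose_apply, dvec]
  push_cast
  congr 1
  funext r
  rw [Complex.star_def, Complex.normSq_eq_conj_mul_self]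

lemma BB_diagonal {B : Matrix (Fin m) (Fin n) ℂ}
    (hD : ∀ j k, j ≠ k → (Bᴴ * B) j k = 0) :
    Bᴴ * B = diagonal (fun j => ((dvec B j : ℝ) : ℂ)) := by
  ext j k
  by_cases h : j = k
  · subst h; rw [diagonal_apply_eq]; exact mulconj_diag B j
  · rw [diagonal_apply_ne _ h]; exact hD j k h

/-- The injection `skew(m-n) × ℝⁿ → stabilizer of B`. -/
noncomputable def phi (B : Matrix (Fin m) (Fin n) ℂ) (U : Matrix (Fin m) (Fin (m - n)) ℂ) :
    (↥(mySkew (m - n)) × (Fin n → ℝ)) →ₗ[ℝ]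
      (Matrix (Fin m) (Fin m) ℂ × Matrix (Fin n) (Fin n) ℂ) where
  toFun p := (U * p.1.1 * Uᴴ
      + Complex.I • (B * diagonal (fun j => ((p.2 j / dvec B j : ℝ) : ℂ)) * Bᴴ),
    Complex.I • diagonal (fun j => ((p.2 j : ℝ) : ℂ)))
  map_add' := by
    rintro ⟨c, t⟩ ⟨c', t'⟩
    have h1 : (fun j => (((t j + t' j) / dvec B j : ℝ) : ℂ))
        = (fun j => ((t j / dvec B j : ℝ) : ℂ) + ((t' j / dvec B j : ℝ) : ℂ)) := by
      funext j; push_cast [add_div]; simp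
    have h2 : (fun j => ((t j + t' j : ℝ) : ℂ))
        = (fun j => ((t j : ℝ) : ℂ) + ((t' j : ℝ) : ℂ)) := by
      funext j; push_cast; simp
    refine Prod.ext ?_ ?_
    · simp only [Prod.fst_add, Prod.snd_add, Prod.smul_fst, Prod.smul_snd, RingHom.id_apply,
        Submodule.coe_add, SetLike.val_smul, Pi.add_apply]
      rw [h1, ← diagonal_add]
      simp only [Matrix.mul_add, Matrix.add_mul, smul_add]
      abel
    · simp only [Prod.fst_add, Prod.snd_add, Prod.smul_fst, Prod.smul_snd, RingHom.id_apply,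
        Submodule.coe_add, SetLike.val_smul, Pi.add_apply]
      rw [h2, ← diagonal_add, smul_add]
  map_smul' := by
    rintro a ⟨c, t⟩
    have h1 : (fun j => (((a • t) j / dvec B j : ℝ) : ℂ))
        = a • (fun j => ((t j / dvec B j : ℝ) : ℂ)) := by
      funext j
      simp only [Pi.smul_apply, smul_eq_mul, Complex.real_smul, mul_div_assoc]
      push_cast; ring
    have h2 : (fun j => (((a • t) j : ℝ) : ℂ)) = a • (fun j => ((t j : ℝ) : ℂ)) := by
      funext j
      simp [Complex.real_smul]
    refine Prod.ext ?_ ?_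
    · simp only [Prod.fst_add, Prod.snd_add, Prod.smul_fst, Prod.smul_snd, RingHom.id_apply,
        Submodule.coe_add, SetLike.val_smul, Pi.add_apply]
      rw [h1, diagonal_smul, Matrix.mul_smul U, Matrix.smul_mul, Matrix.mul_smul B,
        Matrix.smul_mul, smul_comm Complex.I a, ← smul_add]
    · simp only [Prod.fst_add, Prod.snd_add, Prod.smul_fst, Prod.smul_snd, RingHom.id_apply,
        Submodule.coe_add, SetLike.val_smul, Pi.add_apply]
      rw [h2, diagonal_smul, smul_comm Complex.I a]

lemma star_diagCast (f : Fin n → ℝ) :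
    (diagonal (fun j => ((f j : ℝ) : ℂ)))ᴴ = diagonal (fun j => ((f j : ℝ) : ℂ)) := by
  ext i j
  rw [conjTranspose_apply]
  by_cases h : j = i
  · subst h
    simp [diagonal_apply_eq, Complex.star_def, Complex.conj_ofReal]
  · simp [diagonal_apply_ne _ h, diagonal_apply_ne _ (fun hh => h hh.symm)]

lemma phi_mem {B : Matrix (Fin m) (Fin n) ℂ} {U : Matrix (Fin m) (Fin (m - n)) ℂ}
    (hD : ∀ j k, j ≠ k → (Bᴴ * B) j k = 0) (hU2 : Uᴴ * B = 0)
    (p : ↥(mySkew (m - n)) × (Fin n → ℝ)) : phi B U p ∈ stabSet1 B := by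
  obtain ⟨c, t⟩ := p
  have hc : (c.1)ᴴ = -c.1 := c.2
  have hXdef : ((phi B U) (c, t)).1 = U * c.1 * Uᴴ
      + Complex.I • (B * diagonal (fun j => ((t j / dvec B j : ℝ) : ℂ)) * Bᴴ) := rfl
  have hYdef : ((phi B U) (c, t)).2 = Complex.I • diagonal (fun j => ((t j : ℝ) : ℂ)) := rfl
  refine ⟨?_, ?_, ?_⟩
  · rw [hXdef]
    rw [conjTranspose_add, conjTranspose_mul, conjTranspose_mul, conjTranspose_conjTranspose,
      conjTranspose_smul, conjTranspose_mul, conjTranspose_mul, conjTranspose_conjTranspose,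
      hc, star_diagCast, Complex.star_def, Complex.conj_I]
    simp only [Matrix.neg_mul, Matrix.mul_neg, neg_smul, smul_neg, neg_add, Matrix.mul_assoc]
  · rw [hYdef]
    rw [conjTranspose_smul, star_diagCast, Complex.star_def, Complex.conj_I, neg_smul]
  · rw [hXdef, hYdef]
    rw [Matrix.add_mul, Matrix.mul_assoc (U * c.1) _ B, hU2, Matrix.mul_zero,
      Matrix.smul_mul, Matrix.mul_assoc _ Bᴴ B, BB_diagonal hD, Matrix.mul_assoc,
      diagonal_mul_diagonal, Matrix.mul_smul]
    rw [show (B * diagonal fun j => ((t j / dvec B j : ℝ) : ℂ) * ((dvec B j : ℝ) : ℂ))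
        = B * diagonal fun j => ((t j : ℝ) : ℂ) from ?_]
    · rw [zero_add]
    · ext i k
      rw [Matrix.mul_apply, Matrix.mul_apply]
      congr 1
      funext l
      by_cases hl : dvec B l = 0
      · rw [diagonal, diagonal]
        by_cases hlk : l = k
        · subst hlk
          rw [dvec_eq_zero hl i]
          simp
        · simp [of_apply, hlk]
      · congr 1
        rw [diagonal, diagonal]
        simp only [of_apply]
        by_cases hlk : l = k
        · subst hlk
          simp only [if_pos rfl]
          rw [← Complex.ofReal_mul, div_mul_cancel₀ _ hl]
        · simp [hlk]

lemma phi_inj {B : Matrix (Fin m) (Fin n) ℂ} {U : Matrix (Fin m) (Fin (m - n)) ℂ}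
    (hU1 : Uᴴ * U = 1) : Function.Injective (phi B U) := by
  rw [← LinearMap.ker_eq_bot, eq_bot_iff]
  rintro ⟨c, t⟩ hp
  have hp' : phi B U (c, t) = 0 := hp
  have h1 : U * c.1 * Uᴴ
      + Complex.I • (B * diagonal (fun j => ((t j / dvec B j : ℝ) : ℂ)) * Bᴴ)
      = (0 : Matrix (Fin m) (Fin m) ℂ) := congrArg Prod.fst hp'
  have h2 : Complex.I • diagonal (fun j => ((t j : ℝ) : ℂ))
      = (0 : Matrix (Fin n) (Fin n) ℂ) := congrArg Prod.snd hp'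
  have ht : ∀ j, t j = 0 := by
    intro j
    have h3 := congrArg (fun M => M j j) h2
    simp only [Matrix.smul_apply, diagonal_apply_eq, Matrix.zero_apply, smul_eq_mul] at h3
    rcases mul_eq_zero.mp h3 with h | h
    · exact absurd h Complex.I_ne_zero
    · exact_mod_cast h
  have hdz : (diagonal fun j => ((t j / dvec B j : ℝ) : ℂ)) = 0 := by
    have hfun : (fun j => ((t j / dvec B j : ℝ) : ℂ)) = fun _ => 0 := by
      funext j; rw [ht j]; simp
    rw [hfun, diagonal_zero]
  have h1' : U * c.1 * Uᴴ = 0 := by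
    rwa [hdz, Matrix.mul_zero, Matrix.zero_mul, smul_zero, add_zero] at h1
  have hc : c.1 = 0 := by
    have h4 : Uᴴ * (U * c.1 * Uᴴ) * U = (0 : Matrix (Fin (m-n)) (Fin (m-n)) ℂ) := by
      rw [h1', Matrix.mul_zero, Matrix.zero_mul]
    rwa [← Matrix.mul_assoc, ← Matrix.mul_assoc, hU1, Matrix.one_mul, Matrix.mul_assoc,
      hU1, Matrix.mul_one] at h4
  refine Submodule.mem_bot ℝ |>.mpr ?_
  exact Prod.ext (Subtype.ext hc) (funext ht)

/-! ### conjugating the stabilizer by a unitary -/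

noncomputable def stabConjEquiv (A : Matrix (Fin m) (Fin n) ℂ) (V : Matrix (Fin n) (Fin n) ℂ)
    (hV1 : Vᴴ * V = 1) (hV2 : V * Vᴴ = 1) :
    ↥(stabMod A) ≃ₗ[ℝ] ↥(stabMod (A * V)) where
  toFun p := ⟨(p.1.1, Vᴴ * p.1.2 * V), by
    obtain ⟨h1, h2, h3⟩ := p.2
    refine ⟨h1, ?_, ?_⟩
    · show (Vᴴ * p.1.2 * V)ᴴ = _
      rw [conjTranspose_mul, conjTranspose_mul, conjTranspose_conjTranspose, h2]
      show _ = -(_ * _ * _)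
      simp only [Matrix.mul_neg, Matrix.neg_mul, Matrix.mul_assoc]
    · show p.1.1 * (A * V) = (A * V) * (Vᴴ * p.1.2 * V)
      simp only [← Matrix.mul_assoc]
      rw [h3, Matrix.mul_assoc A V Vᴴ, hV2, Matrix.mul_one]⟩
  map_add' := by
    rintro p q
    refine Subtype.ext (Prod.ext rfl ?_)
    show Vᴴ * (p.1.2 + q.1.2) * V = Vᴴ * p.1.2 * V + Vᴴ * q.1.2 * V
    rw [Matrix.mul_add, Matrix.add_mul]
  map_smul' := by
    rintro c p
    refine Subtype.ext (Prod.ext rfl ?_)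
    show Vᴴ * (c • p.1.2) * V = c • (Vᴴ * p.1.2 * V)
    rw [Matrix.mul_smul, Matrix.smul_mul]
  invFun p := ⟨(p.1.1, V * p.1.2 * Vᴴ), by
    obtain ⟨h1, h2, h3⟩ := p.2
    refine ⟨h1, ?_, ?_⟩
    · show (V * p.1.2 * Vᴴ)ᴴ = _
      rw [conjTranspose_mul, conjTranspose_mul, conjTranspose_conjTranspose, h2]
      show _ = -(_ * _ * _)
      simp only [Matrix.mul_neg, Matrix.neg_mul, Matrix.mul_assoc]
    · show p.1.1 * A = A * (V * p.1.2 * Vᴴ)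
      have h4 : p.1.1 * (A * V) * Vᴴ = (A * V) * p.1.2 * Vᴴ := by rw [h3]
      simp only [← Matrix.mul_assoc] at h4 ⊢
      rwa [Matrix.mul_assoc (p.1.1 * A) V Vᴴ, hV2, Matrix.mul_one] at h4⟩
  left_inv := by
    rintro p
    refine Subtype.ext (Prod.ext rfl ?_)
    show V * (Vᴴ * p.1.2 * V) * Vᴴ = p.1.2
    simp only [← Matrix.mul_assoc]
    rw [hV2, Matrix.one_mul, Matrix.mul_assoc, hV2, Matrix.mul_one]
  right_inv := by
    rintro p
    refine Subtype.ext (Prod.ext rfl ?_)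
    show Vᴴ * (V * p.1.2 * Vᴴ) * V = p.1.2
    simp only [← Matrix.mul_assoc]
    rw [hV1, Matrix.one_mul, Matrix.mul_assoc, hV1, Matrix.mul_one]

/-! ### the uniform lower bound -/

lemma finrank_W (hmn : n ≤ m) :
    finrank ℝ (↥(mySkew (m - n)) × (Fin n → ℝ)) = (m - n) ^ 2 + n := by
  rw [finrank_prod, finrank_mySkew]
  simp

lemma stab_ge (A : Matrix (Fin m) (Fin n) ℂ) (hmn : n ≤ m) :
    (m - n) ^ 2 + n ≤ finrank ℝ (stabMod A) := by
  have hH : (Aᴴ * A).IsHermitian := Matrix.isHermitian_conjTranspose_mul_self A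
  set V : Matrix (Fin n) (Fin n) ℂ := (Matrix.IsHermitian.eigenvectorUnitary hH : Matrix (Fin n) (Fin n) ℂ)
    with hVdef
  have hVmem := (Matrix.IsHermitian.eigenvectorUnitary hH).2
  have hV1 : Vᴴ * V = 1 := by
    rw [← Matrix.star_eq_conjTranspose]
    exact Matrix.mem_unitaryGroup_iff'.mp hVmem
  have hV2 : V * Vᴴ = 1 := by
    rw [← Matrix.star_eq_conjTranspose]
    exact Matrix.mem_unitaryGroup_iff.mp hVmem
  set B := A * V with hBdef
  have hBB : Bᴴ * B = diagonal (RCLike.ofReal ∘ hH.eigenvalues) := by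
    have := hH.conjStarAlgAut_star_eigenvectorUnitary
    rw [Unitary.conjStarAlgAut_star_apply] at this
    rw [Matrix.star_eq_conjTranspose] at this
    rw [hBdef, conjTranspose_mul]
    calc Vᴴ * Aᴴ * (A * V) = Vᴴ * (Aᴴ * A) * V := by
          simp only [← Matrix.mul_assoc]
      _ = diagonal (RCLike.ofReal ∘ hH.eigenvalues) := this
  have hD : ∀ j k, j ≠ k → (Bᴴ * B) j k = 0 := by
    intro j k hjk
    rw [hBB, diagonal_apply_ne _ hjk]
  obtain ⟨U, hU1, hU2⟩ := exists_isometry B hmn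
  have hphi := LinearMap.codRestrict (stabMod B) (phi B U) (fun c => phi_mem hD hU2 c)
  have hinj : Function.Injective
      (LinearMap.codRestrict (stabMod B) (phi B U) (fun c => phi_mem hD hU2 c)) := by
    intro x y hxy
    apply phi_inj hU1
    have := congrArg Subtype.val hxy
    exact this
  have hle := LinearMap.finrank_le_finrank_of_injective hinj
  rw [finrank_W hmn] at hle
  have heq : finrank ℝ (stabMod A) = finrank ℝ (stabMod B) :=
    (stabConjEquiv A V hV1 hV2).finrank_eq
  omega

/-! ### the witness matrix and the upper bound at it -/

noncomputable def sigma0 (m n : ℕ) : Matrix (Fin m) (Fin n) ℂ :=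
  Matrix.of fun j k => if (j : ℕ) = (k : ℕ) then ((k : ℕ) + 1 : ℂ) else 0

lemma sigma_mul_entry (hmn : n ≤ m) (X : Matrix (Fin m) (Fin m) ℂ) (j : Fin m) (k : Fin n) :
    (X * sigma0 m n) j k = X j (Fin.castLE hmn k) * ((k : ℕ) + 1 : ℂ) := by
  rw [Matrix.mul_apply]
  rw [Finset.sum_eq_single (Fin.castLE hmn k)]
  · simp [sigma0]
  · intro l _ hl
    have : ¬((l : ℕ) = (k : ℕ)) := by
      intro hc
      exact hl (Fin.ext (by simpa using hc))
    simp [sigma0, this]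
  · intro h; exact absurd (Finset.mem_univ _) h

lemma mul_sigma_entry (hmn : n ≤ m) (Y : Matrix (Fin n) (Fin n) ℂ) (j : Fin m) (k : Fin n) :
    (sigma0 m n * Y) j k
      = if h : (j : ℕ) < n then ((j : ℕ) + 1 : ℂ) * Y ⟨(j : ℕ), h⟩ k else 0 := by
  rw [Matrix.mul_apply]
  by_cases h : (j : ℕ) < n
  · rw [dif_pos h, Finset.sum_eq_single (⟨(j : ℕ), h⟩ : Fin n)]
    · simp [sigma0]
    · intro l _ hl
      have : ¬((j : ℕ) = (l : ℕ)) := by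
        intro hc
        exact hl (Fin.ext (by simpa using hc.symm))
      simp [sigma0, this]
    · intro h'; exact absurd (Finset.mem_univ _) h'
  · rw [dif_neg h]
    apply Finset.sum_eq_zero
    intro l _
    have : ¬((j : ℕ) = (l : ℕ)) := by
      intro hc; exact h (hc ▸ l.2)
    simp [sigma0, this]

/-- main entry relation for members of the stabilizer of sigma0 -/
lemma stab_entry_rel (hmn : n ≤ m) {X : Matrix (Fin m) (Fin m) ℂ} {Y : Matrix (Fin n) (Fin n) ℂ}
    (heq : X * sigma0 m n = sigma0 m n * Y) (j : Fin m) (k : Fin n) :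
    X j (Fin.castLE hmn k) * ((k : ℕ) + 1 : ℂ)
      = if h : (j : ℕ) < n then ((j : ℕ) + 1 : ℂ) * Y ⟨(j : ℕ), h⟩ k else 0 := by
  rw [← sigma_mul_entry hmn, ← mul_sigma_entry hmn, heq]

lemma stab_sigma_zero (hmn : n ≤ m) {X : Matrix (Fin m) (Fin m) ℂ}
    {Y : Matrix (Fin n) (Fin n) ℂ}
    (hX : Xᴴ = -X) (hY : Yᴴ = -Y) (heq : X * sigma0 m n = sigma0 m n * Y)
    (hsub : ∀ a b : Fin (m - n), X ⟨n + a.1, by omega⟩ ⟨n + b.1, by omega⟩ = 0)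
    (him : ∀ j : Fin n, (X (Fin.castLE hmn j) (Fin.castLE hmn j)).im = 0) :
    X = 0 ∧ Y = 0 := by
  have hXskew : ∀ a b, X a b = -(starRingEnd ℂ) (X b a) := by
    intro a b
    have h : star (X b a) = -X a b := by
      rw [← conjTranspose_apply, hX, Matrix.neg_apply]
    rw [show (starRingEnd ℂ) (X b a) = star (X b a) from rfl, h, neg_neg]
  have hYskew : ∀ a b, Y a b = -(starRingEnd ℂ) (Y b a) := by
    intro a b
    have h : star (Y b a) = -Y a b := by
      rw [← conjTranspose_apply, hY, Matrix.neg_apply]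
    rw [show (starRingEnd ℂ) (Y b a) = star (Y b a) from rfl, h, neg_neg]
  -- rows with index ≥ n kill columns g k
  have hlow : ∀ (j : Fin m), ¬((j : ℕ) < n) → ∀ k : Fin n, X j (Fin.castLE hmn k) = 0 := by
    intro j hj k
    have h := stab_entry_rel hmn heq j k
    rw [dif_neg hj] at h
    have hk1 : ((k : ℕ) + 1 : ℂ) ≠ 0 := by
      have h1 := (Nat.cast_ne_zero (R := ℂ)).mpr (Nat.succ_ne_zero (k : ℕ))
      push_cast at h1
      exact h1
    exact (mul_eq_zero.mp h).resolve_right hk1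
  -- top-left block: off-diagonal zero
  have htop : ∀ a b : Fin n, a ≠ b → X (Fin.castLE hmn a) (Fin.castLE hmn b) = 0 := by
    intro a b hab
    have hca : ((Fin.castLE hmn a : Fin m) : ℕ) < n := a.2
    have hcb : ((Fin.castLE hmn b : Fin m) : ℕ) < n := b.2
    have rel1 := stab_entry_rel hmn heq (Fin.castLE hmn a) b
    rw [dif_pos hca] at rel1
    have rel2 := stab_entry_rel hmn heq (Fin.castLE hmn b) a
    rw [dif_pos hcb] at rel2
    have hae : (⟨((Fin.castLE hmn a : Fin m) : ℕ), hca⟩ : Fin n) = a := Fin.ext rfl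
    have hbe : (⟨((Fin.castLE hmn b : Fin m) : ℕ), hcb⟩ : Fin n) = b := Fin.ext rfl
    rw [hae] at rel1
    rw [hbe] at rel2
    have hva : ((Fin.castLE hmn a : Fin m) : ℕ) = (a : ℕ) := rfl
    have hvb : ((Fin.castLE hmn b : Fin m) : ℕ) = (b : ℕ) := rfl
    rw [hva] at rel1
    rw [hvb] at rel2
    -- rel1 : X (g a) (g b) * (b+1) = (a+1) * Y a b
    -- rel2 : X (g b) (g a) * (a+1) = (b+1) * Y b a
    rw [hXskew (Fin.castLE hmn b) (Fin.castLE hmn a), hYskew b a] at rel2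
    have rel2' := congrArg (starRingEnd ℂ) rel2
    simp only [_root_.map_mul, map_neg, Complex.conj_conj, _root_.map_add, Complex.conj_natCast,
      _root_.map_one] at rel2'
    -- rel2' : -X (g a)(g b) * (a+1) = (b+1) * -(Y a b) roughly
    have key : X (Fin.castLE hmn a) (Fin.castLE hmn b)
        * ((((a : ℕ) : ℂ) + 1) * (((a : ℕ) : ℂ) + 1) - (((b : ℕ) : ℂ) + 1) * (((b : ℕ) : ℂ) + 1))
        = 0 := by
      linear_combination (-((((a : ℕ) : ℂ)) + 1)) * rel2' - ((((b : ℕ) : ℂ)) + 1) * rel1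
    have hquad : ((((a : ℕ) : ℂ) + 1) * (((a : ℕ) : ℂ) + 1)
        - (((b : ℕ) : ℂ) + 1) * (((b : ℕ) : ℂ) + 1)) ≠ 0 := by
      intro h
      have h2 : ((((a : ℕ) + 1) * ((a : ℕ) + 1) : ℕ) : ℂ)
          = ((((b : ℕ) + 1) * ((b : ℕ) + 1) : ℕ) : ℂ) := by
        push_cast
        linear_combination h
      have h3 := Nat.cast_inj (R := ℂ) |>.mp h2
      have h4 : (a : ℕ) + 1 = (b : ℕ) + 1 := Nat.mul_self_inj.mp h3
      exact hab (Fin.ext (by omega))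
    exact (mul_eq_zero.mp key).resolve_right hquad
  have hXzero : X = 0 := by
    ext a b
    rw [Matrix.zero_apply]
    by_cases ha : (a : ℕ) < n
    · by_cases hb : (b : ℕ) < n
      · have hae : a = Fin.castLE hmn ⟨(a : ℕ), ha⟩ := Fin.ext rfl
        have hbe : b = Fin.castLE hmn ⟨(b : ℕ), hb⟩ := Fin.ext rfl
        by_cases hab : (⟨(a : ℕ), ha⟩ : Fin n) = ⟨(b : ℕ), hb⟩
        · -- diagonal entry
          have hd : a = b := by
            have := congrArg (fun x : Fin n => (x : ℕ)) hab
            exact Fin.ext (by simpa using this)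
          subst hd
          have hre : (X a a).re = 0 := by
            have h := hXskew a a
            have := congrArg Complex.re h
            simp only [Complex.neg_re, Complex.conj_re] at this
            linarith
          have him' : (X a a).im = 0 := by
            have := him ⟨(a : ℕ), ha⟩
            rwa [← hae] at this
          exact Complex.ext hre him'
        · rw [hae, hbe]
          exact htop _ _ hab
      · -- a < n, b ≥ n : use skew and hlow
        rw [hXskew a b]
        have hbl := hlow b hb
        -- a = castLE ⟨a, ha⟩
        have : X b a = 0 := by
          have hae : a = Fin.castLE hmn ⟨(a : ℕ), ha⟩ := Fin.ext rfl
          rw [hae]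
          exact hbl _
        rw [this, map_zero, neg_zero]
    · by_cases hb : (b : ℕ) < n
      · have hbe : b = Fin.castLE hmn ⟨(b : ℕ), hb⟩ := Fin.ext rfl
        rw [hbe]
        exact hlow a ha _
      · have ha' : n + ((a : ℕ) - n) = (a : ℕ) := by omega
        have hb' : n + ((b : ℕ) - n) = (b : ℕ) := by omega
        have haf : (a : ℕ) - n < m - n := by omega
        have hbf : (b : ℕ) - n < m - n := by omega
        have := hsub ⟨(a : ℕ) - n, haf⟩ ⟨(b : ℕ) - n, hbf⟩
        have hea : (⟨n + ((a : ℕ) - n), by omega⟩ : Fin m) = a := Fin.ext (by simpa using ha')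
        have heb : (⟨n + ((b : ℕ) - n), by omega⟩ : Fin m) = b := Fin.ext (by simpa using hb')
        rwa [hea, heb] at this
  refine ⟨hXzero, ?_⟩
  ext j k
  rw [Matrix.zero_apply]
  have rel := stab_entry_rel hmn heq (Fin.castLE hmn j) k
  have hcj : ((Fin.castLE hmn j : Fin m) : ℕ) < n := j.2
  rw [dif_pos hcj, hXzero] at rel
  simp only [Matrix.zero_apply, zero_mul] at rel
  have hje : (⟨((Fin.castLE hmn j : Fin m) : ℕ), hcj⟩ : Fin n) = j := Fin.ext rfl
  rw [hje] at rel
  have hj1 : (((j : ℕ) : ℂ) + 1) ≠ 0 := by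
    have h1 := (Nat.cast_ne_zero (R := ℂ)).mpr (Nat.succ_ne_zero (j : ℕ))
    push_cast at h1
    exact h1
  exact ((mul_eq_zero.mp rel.symm).resolve_left hj1)

noncomputable def psi (hmn : n ≤ m) :
    ↥(stabMod (sigma0 m n)) →ₗ[ℝ] (↥(mySkew (m - n)) × (Fin n → ℝ)) where
  toFun p := (⟨p.1.1.submatrix (fun i : Fin (m - n) => (⟨n + i.1, by omega⟩ : Fin m))
      (fun i : Fin (m - n) => (⟨n + i.1, by omega⟩ : Fin m)), by
    rw [mem_mySkew, Matrix.conjTranspose_submatrix, p.2.1]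
    ext a b
    simp [Matrix.submatrix_apply]⟩,
    fun j => (p.1.1 (Fin.castLE hmn j) (Fin.castLE hmn j)).im)
  map_add' := by
    intro p q
    refine Prod.ext (Subtype.ext ?_) (funext fun j => ?_)
    · show (p.1.1 + q.1.1).submatrix _ _ = _
      ext a b
      simp [Matrix.submatrix_apply]
    · show ((p.1.1 + q.1.1) _ _).im = _
      simp
  map_smul' := by
    intro c p
    refine Prod.ext (Subtype.ext ?_) (funext fun j => ?_)
    · show ((c • p.1.1).submatrix _ _ : Matrix (Fin (m-n)) (Fin (m-n)) ℂ) = c • _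
      ext a b
      simp [Matrix.submatrix_apply]
    · show ((c • p.1.1) _ _).im = c • (p.1.1 _ _).im
      simp [Complex.smul_im]

lemma psi_inj (hmn : n ≤ m) : Function.Injective (psi (m := m) (n := n) hmn) := by
  rw [← LinearMap.ker_eq_bot, eq_bot_iff]
  rintro p hp
  have hp' : psi hmn p = 0 := hp
  obtain ⟨hX, hY, heq⟩ := p.2
  have h1 : (p.1.1.submatrix (fun i : Fin (m - n) => (⟨n + i.1, by omega⟩ : Fin m))
      (fun i : Fin (m - n) => (⟨n + i.1, by omega⟩ : Fin m)) : Matrix (Fin (m-n)) (Fin (m-n)) ℂ)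
      = 0 := congrArg (fun q => (q.1.1 : Matrix (Fin (m-n)) (Fin (m-n)) ℂ)) hp'
  have h2 : ∀ j : Fin n, (p.1.1 (Fin.castLE hmn j) (Fin.castLE hmn j)).im = 0 := by
    intro j
    exact congrFun (congrArg Prod.snd hp') j
  have hsub : ∀ a b : Fin (m - n),
      p.1.1 ⟨n + a.1, by omega⟩ ⟨n + b.1, by omega⟩ = 0 := by
    intro a b
    exact congrFun (congrFun h1 a) b
  obtain ⟨hX0, hY0⟩ := stab_sigma_zero hmn hX hY heq hsub h2
  refine Submodule.mem_bot ℝ |>.mpr (Subtype.ext ?_)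
  exact Prod.ext hX0 hY0

lemma stab_sigma_eq (hn : 1 ≤ n) (hmn : n ≤ m) :
    finrank ℝ (stabMod (sigma0 m n)) = (m - n) ^ 2 + n := by
  have h1 := stab_ge (sigma0 m n) hmn
  have h2 := LinearMap.finrank_le_finrank_of_injective (psi_inj hmn)
  rw [finrank_W hmn] at h2
  omega

theorem stmt1 (m n : ℕ) (hn : 1 ≤ n) (hmn : n ≤ m) :
    IsLeast {d : ℕ | ∃ A : Matrix (Fin m) (Fin n) ℂ,
        d = Module.finrank ℝ (Submodule.span ℝ (stabSet1 A))}
      ((m - n) ^ 2 + n) ∧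
    IsGreatest {d : ℕ | ∃ A : Matrix (Fin m) (Fin n) ℂ,
        d = Module.finrank ℝ (Submodule.span ℝ (tangSet1 A))}
      (2 * m * n - n) := by
  have harith : (m - n) ^ 2 + n + (2 * m * n - n) = m ^ 2 + n ^ 2 := by
    have h2 : n ≤ 2 * m * n := by nlinarith
    zify [hmn, h2]
    ring
  constructor
  · constructor
    · refine ⟨sigma0 m n, ?_⟩
      rw [span_stabSet1, stab_sigma_eq hn hmn]
    · rintro d ⟨A, rfl⟩
      rw [span_stabSet1]
      exact stab_ge A hmn
  · constructor
    · refine ⟨sigma0 m n, ?_⟩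
      have h1 := stab_add_tang (sigma0 m n)
      rw [span_stabSet1, stab_sigma_eq hn hmn] at h1
      omega
    · rintro d ⟨A, rfl⟩
      have h1 := stab_add_tang A
      have h2 := stab_ge A hmn
      rw [span_stabSet1] at h1
      omega
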